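/- Let n ≥ 1 and let Δ = (δ₁, δ₂, δ₃) be a triple of vectors in ℤⁿ with δ₁ + δ₂ + δ₃ = 0. Then there exists a constant ε = ε(Δ) ≥ 0 with the following property: for all distinct α₁, α₂ ∈ ℂ and all κ = (κ₁,…,κₙ) with each κ_j ∈ ℂ∖{0}, setting S = ℂ∖{α₁,α₂} and defining f : S → (ℂ∖{0})ⁿ by f(z)_j = κ_j (z−α₁)^{−δ₁^j} (z−α₂)^{−δ₂^j} (integer powers, δ_i = (δ_i^1,…,δ_i^n)), there exists v ∈ ℝⁿ such that, with Γ = ⋃_{i=1}^{3} {v + t·δ_i : t ∈ [0,∞)}, both Log(f(S)) ⊆ U_ε(Γ) and Γ ⊆ U_ε(Log(f(S))). -/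

import Mathlib

/-- Coordinate-wise logarithm of moduli, `Log(z)_i = log |z_i|`. -/
noncomputable def LogMap {n : ℕ} (z : Fin n → ℂ) : Fin n → ℝ :=
  fun i => Real.log (‖z i‖)

/-- Open ε-neighbourhood of a set with respect to the sup norm on `Fin n → ℝ`. -/
def nbhd {n : ℕ} (ε : ℝ) (X : Set (Fin n → ℝ)) : Set (Fin n → ℝ) :=
  {y | ∃ x ∈ X, ‖y - x‖ < ε}

/-- Ray emanating from `v` in direction `d`. -/
def ray {n : ℕ} (v d : Fin n → ℝ) : Set (Fin n → ℝ) :=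
  {x | ∃ t : ℝ, 0 ≤ t ∧ x = v + t • d}

/-- Real vector obtained from an integer vector. -/
def intCast {n : ℕ} (d : Fin n → ℤ) : Fin n → ℝ := fun i => (d i : ℝ)

lemma exists_point (α₁ α₂ : ℂ) (s₁ s₂ : ℝ) (h1 : 0 < s₁) (h2 : 0 < s₂)
    (h3 : s₁ ≤ s₂ + ‖α₁ - α₂‖) (h4 : s₂ ≤ s₁ + ‖α₁ - α₂‖)
    (h5 : ‖α₁ - α₂‖ ≤ s₁ + s₂) (hα : α₁ ≠ α₂) :
    ∃ z : ℂ, ‖z - α₁‖ = s₁ ∧ ‖z - α₂‖ = s₂ := by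
  set r : ℝ := ‖α₁ - α₂‖ with hrdef
  have hr : 0 < r := by
    simpa [hrdef] using (norm_pos_iff.mpr (sub_ne_zero.mpr hα))
  set x : ℝ := (s₁ ^ 2 + r ^ 2 - s₂ ^ 2) / (2 * r) with hxdef
  have hx' : 2 * r * x = s₁ ^ 2 + r ^ 2 - s₂ ^ 2 := by
    rw [hxdef]; field_simp
  have hx2 : x ^ 2 ≤ s₁ ^ 2 := by
    rw [hxdef, div_pow, div_le_iff₀ (by positivity)]
    have f1 : 0 ≤ (s₁ + r) ^ 2 - s₂ ^ 2 := by nlinarith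
    have f2 : 0 ≤ s₂ ^ 2 - (s₁ - r) ^ 2 := by nlinarith
    nlinarith [mul_nonneg f1 f2]
  set y : ℝ := Real.sqrt (s₁ ^ 2 - x ^ 2) with hydef
  have hy2 : y ^ 2 = s₁ ^ 2 - x ^ 2 := Real.sq_sqrt (by linarith)
  set u : ℂ := (α₂ - α₁) / (r : ℂ) with hudef
  have hu : ‖u‖ = 1 := by
    rw [hudef, norm_div, norm_sub_rev α₂ α₁, ← hrdef]
    simp [Complex.norm_real, abs_of_pos hr, div_self hr.ne']
  have hrC : (r : ℂ) ≠ 0 := by exact_mod_cast hr.ne'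
  refine ⟨α₁ + ((x : ℂ) + (y : ℂ) * Complex.I) * u, ?_, ?_⟩
  · have hz : α₁ + ((x : ℂ) + (y : ℂ) * Complex.I) * u - α₁
        = ((x : ℂ) + (y : ℂ) * Complex.I) * u := by ring
    rw [hz, norm_mul, hu, mul_one, Complex.norm_def]
    have hns : Complex.normSq ((x : ℂ) + (y : ℂ) * Complex.I) = s₁ ^ 2 := by
      simp [Complex.normSq_apply]
      linear_combination hy2
    rw [hns, Real.sqrt_sq h1.le]
  · have hz : α₁ + ((x : ℂ) + (y : ℂ) * Complex.I) * u - α₂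
        = (((x - r : ℝ) : ℂ) + (y : ℂ) * Complex.I) * u := by
      rw [hudef]
      push_cast
      field_simp
      ring
    rw [hz, norm_mul, hu, mul_one, Complex.norm_def]
    have hns : Complex.normSq (((x - r : ℝ) : ℂ) + (y : ℂ) * Complex.I) = s₂ ^ 2 := by
      simp [Complex.normSq_apply]
      linear_combination hy2 - hx'
    rw [hns, Real.sqrt_sq h2.le]

lemma logmap_formula {n : ℕ} (κ : Fin n → ℂ) (δ₁ δ₂ : Fin n → ℤ) (z α₁ α₂ : ℂ)
    (hκ : ∀ j, κ j ≠ 0) (h1 : z ≠ α₁) (h2 : z ≠ α₂) (j : Fin n) :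
    LogMap (fun j => κ j * (z - α₁) ^ (-(δ₁ j)) * (z - α₂) ^ (-(δ₂ j))) j
      = Real.log (‖κ j‖) - (δ₁ j : ℝ) * Real.log (‖z - α₁‖)
        - (δ₂ j : ℝ) * Real.log (‖z - α₂‖) := by
  have hz1 : (z - α₁) ≠ 0 := sub_ne_zero.mpr h1
  have hz2 : (z - α₂) ≠ 0 := sub_ne_zero.mpr h2
  unfold LogMap
  rw [norm_mul, norm_mul, norm_zpow, norm_zpow,
    Real.log_mul (mul_ne_zero ((norm_ne_zero_iff.mpr) (hκ j))
      (zpow_ne_zero _ ((norm_pos_iff.mpr hz1).ne'))) (by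
      exact zpow_ne_zero _ ((norm_pos_iff.mpr hz2).ne')),
    Real.log_mul ((norm_ne_zero_iff.mpr) (hκ j)) (by
      exact zpow_ne_zero _ ((norm_pos_iff.mpr hz1).ne')),
    Real.log_zpow, Real.log_zpow]
  push_cast
  ring

lemma abs_log_sub_log_le {p q : ℝ} (hp : 0 < p) (hq : 0 < q)
    (h1 : p ≤ 2 * q) (h2 : q ≤ 2 * p) :
    |Real.log p - Real.log q| ≤ Real.log 2 := by
  rw [abs_sub_le_iff]
  constructor
  · rw [sub_le_iff_le_add, ← Real.log_mul two_ne_zero hq.ne']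
    exact (Real.log_le_log_iff hp (by positivity)).mpr h1
  · rw [sub_le_iff_le_add, ← Real.log_mul two_ne_zero hp.ne']
    exact (Real.log_le_log_iff hq (by positivity)).mpr h2

/-- For any toric degree `Δ = (δ₁, δ₂, δ₃)` (with `δ₁ + δ₂ + δ₃ = 0`)
there is a constant `ε ≥ 0` such that the amoeba of any complex rational curve of toric
degree `Δ` is within `ε` (in sup norm) of the image of a tropical rational curve of
degree `Δ`, i.e. of a union of three rays from a common vertex `v` in directions
`δ₁, δ₂, δ₃`, and vice versa. -/
theorem stmt_0 (n : ℕ) (hn : 1 ≤ n) (δ₁ δ₂ δ₃ : Fin n → ℤ)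
    (hΔ : δ₁ + δ₂ + δ₃ = 0) :
    ∃ ε : ℝ, 0 ≤ ε ∧
      ∀ (α₁ α₂ : ℂ), α₁ ≠ α₂ →
      ∀ κ : Fin n → ℂ, (∀ j, κ j ≠ 0) →
      ∃ v : Fin n → ℝ,
        LogMap '' ((fun z : ℂ => fun j : Fin n =>
              κ j * (z - α₁) ^ (-(δ₁ j)) * (z - α₂) ^ (-(δ₂ j))) ''
            {z : ℂ | z ≠ α₁ ∧ z ≠ α₂})
          ⊆ nbhd ε (ray v (intCast δ₁) ∪ ray v (intCast δ₂) ∪ ray v (intCast δ₃)) ∧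
        ray v (intCast δ₁) ∪ ray v (intCast δ₂) ∪ ray v (intCast δ₃)
          ⊆ nbhd ε (LogMap '' ((fun z : ℂ => fun j : Fin n =>
              κ j * (z - α₁) ^ (-(δ₁ j)) * (z - α₂) ^ (-(δ₂ j))) ''
            {z : ℂ | z ≠ α₁ ∧ z ≠ α₂})) := by
  have hδ3 : ∀ j, (δ₃ j : ℝ) = -(δ₁ j : ℝ) - (δ₂ j : ℝ) := by
    intro j
    have h := congrFun hΔ j
    simp only [Pi.add_apply, Pi.zero_apply] at h
    push_cast [show δ₃ j = -δ₁ j - δ₂ j by omega]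
    ring
  set C : ℝ := ∑ j : Fin n, (|(δ₁ j : ℝ)| + |(δ₂ j : ℝ)|) with hCdef
  have hC0 : 0 ≤ C := Finset.sum_nonneg fun j _ => by positivity
  have hCj : ∀ j, |(δ₁ j : ℝ)| + |(δ₂ j : ℝ)| ≤ C := fun j =>
    Finset.single_le_sum (f := fun j => |(δ₁ j : ℝ)| + |(δ₂ j : ℝ)|)
      (fun i _ => by positivity) (Finset.mem_univ j)
  have hl2 : 0 ≤ Real.log 2 := Real.log_nonneg one_le_two
  have hε : (0:ℝ) < 1 + Real.log 2 * C := by nlinarith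
  refine ⟨1 + Real.log 2 * C, by linarith, ?_⟩
  intro α₁ α₂ hα κ hκ
  set r : ℝ := ‖α₁ - α₂‖ with hrdef
  have hr : 0 < r := norm_pos_iff.mpr (sub_ne_zero.mpr hα)
  set L : ℝ := Real.log r with hLdef
  set c : Fin n → ℝ := fun j => Real.log (‖κ j‖) with hcdef
  set v : Fin n → ℝ := fun j => c j - L * (δ₁ j : ℝ) - L * (δ₂ j : ℝ) with hvdef
  have hΓ1 : ∀ a : ℝ, a ≤ L →
      (fun j => c j - a * (δ₁ j : ℝ) - L * (δ₂ j : ℝ)) ∈ ray v (intCast δ₁) := by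
    intro a ha
    refine ⟨L - a, by linarith, ?_⟩
    funext j
    simp only [hvdef, Pi.add_apply, Pi.smul_apply, smul_eq_mul, intCast]
    ring
  have hΓ2 : ∀ b : ℝ, b ≤ L →
      (fun j => c j - L * (δ₁ j : ℝ) - b * (δ₂ j : ℝ)) ∈ ray v (intCast δ₂) := by
    intro b hb
    refine ⟨L - b, by linarith, ?_⟩
    funext j
    simp only [hvdef, Pi.add_apply, Pi.smul_apply, smul_eq_mul, intCast]
    ring
  have hΓ3 : ∀ s : ℝ, L ≤ s →
      (fun j => c j - s * (δ₁ j : ℝ) - s * (δ₂ j : ℝ)) ∈ ray v (intCast δ₃) := by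
    intro s hs
    refine ⟨s - L, by linarith, ?_⟩
    funext j
    simp only [hvdef, Pi.add_apply, Pi.smul_apply, smul_eq_mul, intCast]
    rw [hδ3 j]
    ring
  refine ⟨v, ?_, ?_⟩
  · -- amoeba ⊆ neighbourhood of Γ
    rintro y ⟨w, ⟨z, ⟨hzne1, hzne2⟩, rfl⟩, rfl⟩
    set s₁ : ℝ := ‖z - α₁‖ with hs1def
    set s₂ : ℝ := ‖z - α₂‖ with hs2def
    have hs1 : 0 < s₁ := norm_pos_iff.mpr (sub_ne_zero.mpr hzne1)
    have hs2 : 0 < s₂ := norm_pos_iff.mpr (sub_ne_zero.mpr hzne2)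
    have t1 : s₂ ≤ s₁ + r := by
      have h := norm_add_le (z - α₁) (α₁ - α₂)
      rw [show z - α₁ + (α₁ - α₂) = z - α₂ by ring] at h
      rw [hs2def, hs1def, hrdef]; exact h
    have t2 : s₁ ≤ s₂ + r := by
      have h := norm_add_le (z - α₂) (α₂ - α₁)
      rw [show z - α₂ + (α₂ - α₁) = z - α₁ by ring, norm_sub_rev α₂ α₁] at h
      rw [hs2def, hs1def, hrdef]; exact h
    have t3 : r ≤ s₁ + s₂ := by
      have h := norm_add_le (α₁ - z) (z - α₂)
      rw [show α₁ - z + (z - α₂) = α₁ - α₂ by ring, norm_sub_rev α₁ z] at h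
      rw [hs2def, hs1def, hrdef]; exact h
    have hyj : ∀ j, LogMap ((fun z : ℂ => fun j : Fin n =>
          κ j * (z - α₁) ^ (-(δ₁ j)) * (z - α₂) ^ (-(δ₂ j))) z) j
        = c j - (δ₁ j : ℝ) * Real.log s₁ - (δ₂ j : ℝ) * Real.log s₂ := by
      intro j
      exact logmap_formula κ δ₁ δ₂ z α₁ α₂ hκ hzne1 hzne2 j
    obtain ⟨a', b', hmem, hda, hdb⟩ : ∃ a' b' : ℝ,
        (fun j => c j - a' * (δ₁ j : ℝ) - b' * (δ₂ j : ℝ)) ∈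
          (ray v (intCast δ₁) ∪ ray v (intCast δ₂) ∪ ray v (intCast δ₃)) ∧
        |Real.log s₁ - a'| ≤ Real.log 2 ∧ |Real.log s₂ - b'| ≤ Real.log 2 := by
      rcases le_total s₁ s₂ with h12 | h12
      · rcases le_total s₁ r with har | har
        · refine ⟨Real.log s₁, L, Or.inl (Or.inl (hΓ1 _
            ((Real.log_le_log_iff hs1 hr).mpr har))), by simpa using hl2, ?_⟩
          rw [hLdef]
          exact abs_log_sub_log_le hs2 hr (by linarith) (by linarith)
        · refine ⟨Real.log s₁, Real.log s₁, Or.inr (hΓ3 _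
            ((Real.log_le_log_iff hr hs1).mpr har)), by simpa using hl2, ?_⟩
          exact abs_log_sub_log_le hs2 hs1 (by linarith) (by linarith)
      · rcases le_total s₂ r with hbr | hbr
        · refine ⟨L, Real.log s₂, Or.inl (Or.inr (hΓ2 _
            ((Real.log_le_log_iff hs2 hr).mpr hbr))), ?_, by simpa using hl2⟩
          rw [hLdef]
          exact abs_log_sub_log_le hs1 hr (by linarith) (by linarith)
        · refine ⟨Real.log s₂, Real.log s₂, Or.inr (hΓ3 _
            ((Real.log_le_log_iff hr hs2).mpr hbr)), ?_, by simpa using hl2⟩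
          exact abs_log_sub_log_le hs1 hs2 (by linarith) (by linarith)
    refine ⟨_, hmem, ?_⟩
    rw [pi_norm_lt_iff hε]
    intro j
    simp only [Pi.sub_apply]
    rw [hyj j, Real.norm_eq_abs]
    have heq : c j - (δ₁ j : ℝ) * Real.log s₁ - (δ₂ j : ℝ) * Real.log s₂ -
        (c j - a' * (δ₁ j : ℝ) - b' * (δ₂ j : ℝ))
        = (a' - Real.log s₁) * (δ₁ j : ℝ) + (b' - Real.log s₂) * (δ₂ j : ℝ) := by ring
    rw [heq]
    have h₁ : |(a' - Real.log s₁) * (δ₁ j : ℝ)| ≤ Real.log 2 * |(δ₁ j : ℝ)| := by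
      rw [abs_mul]
      exact mul_le_mul_of_nonneg_right (by rwa [abs_sub_comm] at hda) (abs_nonneg _)
    have h₂ : |(b' - Real.log s₂) * (δ₂ j : ℝ)| ≤ Real.log 2 * |(δ₂ j : ℝ)| := by
      rw [abs_mul]
      exact mul_le_mul_of_nonneg_right (by rwa [abs_sub_comm] at hdb) (abs_nonneg _)
    have h₃ := abs_add_le ((a' - Real.log s₁) * (δ₁ j : ℝ)) ((b' - Real.log s₂) * (δ₂ j : ℝ))
    have h₄ := mul_le_mul_of_nonneg_left (hCj j) hl2
    nlinarith
  · -- Γ ⊆ neighbourhood of amoeba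
    intro x hx
    have hmem : x ∈ LogMap '' ((fun z : ℂ => fun j : Fin n =>
        κ j * (z - α₁) ^ (-(δ₁ j)) * (z - α₂) ^ (-(δ₂ j))) ''
        {z : ℂ | z ≠ α₁ ∧ z ≠ α₂}) := by
      have hexp : ∀ t : ℝ, 0 ≤ t → Real.exp (-t) ≤ 1 := by
        intro t ht
        rw [show (1:ℝ) = Real.exp 0 by rw [Real.exp_zero]]
        exact Real.exp_le_exp.mpr (by linarith)
      have hexp' : ∀ t : ℝ, 0 ≤ t → 1 ≤ Real.exp t := by
        intro t ht
        rw [show (1:ℝ) = Real.exp 0 by rw [Real.exp_zero]]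
        exact Real.exp_le_exp.mpr (by linarith)
      rcases hx with (⟨t, ht, rfl⟩ | ⟨t, ht, rfl⟩) | ⟨t, ht, rfl⟩
      · -- ray δ₁ : s₁ = r e^{-t}, s₂ = r
        obtain ⟨z, hz1, hz2⟩ := exists_point α₁ α₂ (r * Real.exp (-t)) r
          (by positivity) hr
          (by rw [← hrdef]; nlinarith [Real.exp_pos (-t), hexp t ht])
          (by rw [← hrdef]; nlinarith [Real.exp_pos (-t)])
          (by rw [← hrdef]; nlinarith [Real.exp_pos (-t)]) hα
        have hzne1 : z ≠ α₁ := by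
          intro h; rw [h, sub_self, norm_zero] at hz1
          nlinarith [Real.exp_pos (-t)]
        have hzne2 : z ≠ α₂ := by
          intro h; rw [h, sub_self, norm_zero] at hz2
          linarith
        refine ⟨_, ⟨z, ⟨hzne1, hzne2⟩, rfl⟩, ?_⟩
        funext j
        rw [logmap_formula κ δ₁ δ₂ z α₁ α₂ hκ hzne1 hzne2 j, hz1, hz2,
          Real.log_mul hr.ne' (Real.exp_ne_zero _), Real.log_exp]
        simp only [hvdef, hcdef, hLdef, Pi.add_apply, Pi.smul_apply, smul_eq_mul, intCast]
        ring
      · -- ray δ₂ : s₁ = r, s₂ = r e^{-t}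
        obtain ⟨z, hz1, hz2⟩ := exists_point α₁ α₂ r (r * Real.exp (-t))
          hr (by positivity)
          (by rw [← hrdef]; nlinarith [Real.exp_pos (-t)])
          (by rw [← hrdef]; nlinarith [Real.exp_pos (-t), hexp t ht])
          (by rw [← hrdef]; nlinarith [Real.exp_pos (-t)]) hα
        have hzne1 : z ≠ α₁ := by
          intro h; rw [h, sub_self, norm_zero] at hz1
          linarith
        have hzne2 : z ≠ α₂ := by
          intro h; rw [h, sub_self, norm_zero] at hz2
          nlinarith [Real.exp_pos (-t)]
        refine ⟨_, ⟨z, ⟨hzne1, hzne2⟩, rfl⟩, ?_⟩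
        funext j
        rw [logmap_formula κ δ₁ δ₂ z α₁ α₂ hκ hzne1 hzne2 j, hz1, hz2,
          Real.log_mul hr.ne' (Real.exp_ne_zero _), Real.log_exp]
        simp only [hvdef, hcdef, hLdef, Pi.add_apply, Pi.smul_apply, smul_eq_mul, intCast]
        ring
      · -- ray δ₃ : s₁ = s₂ = r e^{t}
        obtain ⟨z, hz1, hz2⟩ := exists_point α₁ α₂ (r * Real.exp t) (r * Real.exp t)
          (by positivity) (by positivity)
          (by rw [← hrdef]; nlinarith [Real.exp_pos t])
          (by rw [← hrdef]; nlinarith [Real.exp_pos t])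
          (by rw [← hrdef]; nlinarith [Real.exp_pos t, hexp' t ht]) hα
        have hzne1 : z ≠ α₁ := by
          intro h; rw [h, sub_self, norm_zero] at hz1
          nlinarith [Real.exp_pos t]
        have hzne2 : z ≠ α₂ := by
          intro h; rw [h, sub_self, norm_zero] at hz2
          nlinarith [Real.exp_pos t]
        refine ⟨_, ⟨z, ⟨hzne1, hzne2⟩, rfl⟩, ?_⟩
        funext j
        rw [logmap_formula κ δ₁ δ₂ z α₁ α₂ hκ hzne1 hzne2 j, hz1, hz2,
          Real.log_mul hr.ne' (Real.exp_ne_zero _), Real.log_exp]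
        simp only [hvdef, hcdef, hLdef, Pi.add_apply, Pi.smul_apply, smul_eq_mul, intCast]
        rw [hδ3 j]
        ring
    exact ⟨x, hmem, by simp only [sub_self, norm_zero]; exact hε⟩
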